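/- If G is a graph without isolated vertices, then γ_dR^m(G) ≤ 2·γ_mR(G) − 1, with equality if and only if G = K₂. -/

import Mathlib

open Finset

/-- A set `S` dominates `G`: every vertex outside `S` has a neighbor in `S`. -/
def IsDomSet {V : Type*} (G : SimpleGraph V) (S : Set V) : Prop :=
  ∀ v ∉ S, ∃ u ∈ S, G.Adj v u

/-- A maximal dominating set: dominating, and its complement is not dominating. -/
def IsMaxDomSet {V : Type*} (G : SimpleGraph V) (S : Set V) : Prop :=
  IsDomSet G S ∧ ¬ IsDomSet G Sᶜ

/-- Double Roman dominating function. -/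
def IsDRDF {V : Type*} (G : SimpleGraph V) (f : V → ℕ) : Prop :=
  (∀ v, f v ≤ 3) ∧
  (∀ v, f v = 0 → (∃ u, G.Adj v u ∧ f u = 3) ∨
      ∃ u w, u ≠ w ∧ G.Adj v u ∧ G.Adj v w ∧ f u = 2 ∧ f w = 2) ∧
  (∀ v, f v = 1 → ∃ u, G.Adj v u ∧ (f u = 2 ∨ f u = 3))

/-- Maximal double Roman dominating function: a DRDF whose 0-set is not dominating. -/
def IsMDRDF {V : Type*} (G : SimpleGraph V) (f : V → ℕ) : Prop :=
  IsDRDF G f ∧ ¬ IsDomSet G {v | f v = 0}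

/-- Roman dominating function. -/
def IsRDF {V : Type*} (G : SimpleGraph V) (f : V → ℕ) : Prop :=
  (∀ v, f v ≤ 2) ∧ ∀ v, f v = 0 → ∃ u, G.Adj v u ∧ f u = 2

/-- Maximal Roman dominating function. -/
def IsMRDF {V : Type*} (G : SimpleGraph V) (f : V → ℕ) : Prop :=
  IsRDF G f ∧ ¬ IsDomSet G {v | f v = 0}

/-- Double Roman domination number. -/
noncomputable def drdNum {V : Type*} [Fintype V] (G : SimpleGraph V) : ℕ :=
  sInf {w | ∃ f, IsDRDF G f ∧ ∑ v, f v = w}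

/-- Maximal double Roman domination number. -/
noncomputable def mdrdNum {V : Type*} [Fintype V] (G : SimpleGraph V) : ℕ :=
  sInf {w | ∃ f, IsMDRDF G f ∧ ∑ v, f v = w}

/-- Maximal Roman domination number. -/
noncomputable def mRomanNum {V : Type*} [Fintype V] (G : SimpleGraph V) : ℕ :=
  sInf {w | ∃ f, IsMRDF G f ∧ ∑ v, f v = w}

/-- Maximal domination number. -/
noncomputable def maxDomNum {V : Type*} [Fintype V] (G : SimpleGraph V) : ℕ :=
  sInf {k | ∃ S : Set V, IsMaxDomSet G S ∧ S.ncard = k}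

section Aux
variable {V : Type*} [Fintype V]

lemma aux_not_dom_empty [Nonempty V] (G : SimpleGraph V) : ¬ IsDomSet G (∅ : Set V) := by
  intro hd
  obtain ⟨v⟩ := ‹Nonempty V›
  obtain ⟨u, hu, -⟩ := hd v (by simp)
  exact hu

lemma aux_mrdf_one [Nonempty V] (G : SimpleGraph V) : IsMRDF G (fun _ => 1) := by
  refine ⟨⟨fun v => by norm_num, fun v h => by simp at h⟩, ?_⟩
  have : {v : V | (1 : ℕ) = 0} = (∅ : Set V) := by ext v; simp
  rw [this]
  exact aux_not_dom_empty G

lemma aux_mroman_nonempty [Nonempty V] (G : SimpleGraph V) :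
    {w | ∃ f, IsMRDF G f ∧ ∑ v, f v = w}.Nonempty :=
  ⟨_, fun _ => 1, aux_mrdf_one G, rfl⟩

lemma aux_sum_split (g h : V → ℕ) (s : Finset V) (hs : ∑ v ∈ s, g v + 2 ≤ ∑ v ∈ s, h v)
    (hr : ∀ v ∉ s, g v ≤ h v) : ∑ v, g v + 2 ≤ ∑ v, h v := by
  classical
  have h1 := Finset.sum_sdiff (f := g) (s₁ := s) (s₂ := univ) (by simp)
  have h2 := Finset.sum_sdiff (f := h) (s₁ := s) (s₂ := univ) (by simp)
  have h3 : ∑ v ∈ univ \ s, g v ≤ ∑ v ∈ univ \ s, h v := by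
    refine Finset.sum_le_sum fun v hv => ?_
    rw [Finset.mem_sdiff] at hv
    exact hr v hv.2
  omega

lemma aux_mroman_pos [Nonempty V] (G : SimpleGraph V) : 1 ≤ mRomanNum G := by
  obtain ⟨f, hf, hsum⟩ := Nat.sInf_mem (aux_mroman_nonempty G)
  rw [mRomanNum]
  rw [← hsum]
  by_contra hlt
  push_neg at hlt
  have h0 : ∀ v, f v = 0 := by
    intro v
    have := Finset.sum_eq_zero_iff.mp (Nat.lt_one_iff.mp hlt) v (Finset.mem_univ v)
    exact this
  exact hf.2 (fun v hv => absurd (h0 v) hv)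

lemma main_ineq [Nonempty V] (G : SimpleGraph V) (h : ∀ v, ∃ u, G.Adj v u)
    (hK : ¬ (Fintype.card V = 2 ∧ G = ⊤)) :
    mdrdNum G + 2 ≤ 2 * mRomanNum G := by
  classical
  obtain ⟨f, hf, hsum⟩ := Nat.sInf_mem (aux_mroman_nonempty G)
  have hsum' : 2 * ∑ v, f v = 2 * mRomanNum G := by rw [mRomanNum, ← hsum]
  clear hsum
  have hfle : ∀ v, f v ≤ 2 := hf.1.1
  have hf0 : ∀ v, f v = 0 → ∃ u, G.Adj v u ∧ f u = 2 := hf.1.2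
  suffices hsuff : ∃ g, IsMDRDF G g ∧ ∑ v, g v + 2 ≤ ∑ v, 2 * f v by
    obtain ⟨g, hg, hgs⟩ := hsuff
    have hle : mdrdNum G ≤ ∑ v, g v := Nat.sInf_le ⟨g, hg, rfl⟩
    have h2f : ∑ v, 2 * f v = 2 * ∑ v, f v := by rw [Finset.mul_sum]
    omega
  by_cases hc1 : ∃ u v : V, u ≠ v ∧ f u = 2 ∧ f v = 2
  · -- two vertices with value 2
    obtain ⟨u, v, huv, hu2, hv2⟩ := hc1
    refine ⟨fun x => if f x = 2 then 3 else if f x = 1 then 2 else 0, ⟨⟨?_, ?_, ?_⟩, ?_⟩, ?_⟩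
    · intro x; dsimp only; split_ifs <;> omega
    · intro x hx
      dsimp only at hx
      have hx0 : f x = 0 := by
        by_contra hne
        have := hfle x
        split_ifs at hx <;> omega
      obtain ⟨y, hy, hy2⟩ := hf0 x hx0
      exact Or.inl ⟨y, hy, by simp [hy2]⟩
    · intro x hx
      dsimp only at hx
      exfalso; split_ifs at hx <;> omega
    · have hset : {x | (if f x = 2 then 3 else if f x = 1 then 2 else 0) = 0} = {x | f x = 0} := by
        ext x
        have hb := hfle x
        simp only [Set.mem_setOf_eq]
        constructor
        · intro hx0; split_ifs at hx0 <;> omega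
        · intro hx0; simp [hx0]
      beta_reduce
      rw [hset]; exact hf.2
    · refine aux_sum_split _ (fun x => 2 * f x) {u, v} ?_ ?_
      · rw [Finset.sum_pair huv, Finset.sum_pair huv]
        norm_num [hu2, hv2]
      · intro x _
        have := hfle x
        split_ifs <;> omega
  · by_cases hc2 : ∃ u, f u = 2
    · obtain ⟨u, hu2⟩ := hc2
      by_cases hz : ∃ z y, f z = 1 ∧ G.Adj z y ∧ 1 ≤ f y
      · obtain ⟨z, y, hz1, hzy, hy1⟩ := hz
        have huz : u ≠ z := fun e => by rw [e, hz1] at hu2; omega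
        refine ⟨fun x => if x = z then 1 else if f x = 2 then 3 else if f x = 1 then 2 else 0,
          ⟨⟨?_, ?_, ?_⟩, ?_⟩, ?_⟩
        · intro x; dsimp only; split_ifs <;> omega
        · intro x hx
          dsimp only at hx
          have hx0 : f x = 0 := by
            have := hfle x
            split_ifs at hx <;> omega
          obtain ⟨w, hw, hw2⟩ := hf0 x hx0
          have hwz : w ≠ z := fun e => by rw [e, hz1] at hw2; omega
          exact Or.inl ⟨w, hw, by simp [hwz, hw2]⟩
        · intro x hx
          dsimp only at hx
          have hxz : x = z := by
            split_ifs at hx <;> first | assumption | omega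
          subst hxz
          refine ⟨y, hzy, ?_⟩
          have hyz : y ≠ x := fun e => (G.irrefl (e ▸ hzy))
          dsimp only
          rcases Nat.lt_or_ge (f y) 2 with hlt | hge
          · have hfy : f y = 1 := by omega
            simp [hyz, hfy]
          · have hfy : f y = 2 := le_antisymm (hfle y) hge
            simp [hyz, hfy]
        · have hset : {x | (if x = z then 1 else if f x = 2 then 3 else if f x = 1 then 2 else 0) = 0}
              = {x | f x = 0} := by
            ext x
            have hb := hfle x
            simp only [Set.mem_setOf_eq]
            constructor
            · intro hx0; split_ifs at hx0 <;> omega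
            · intro hx0
              have hxz : x ≠ z := fun e => by rw [e, hz1] at hx0; omega
              simp [hxz, hx0]
          beta_reduce
          rw [hset]; exact hf.2
        · refine aux_sum_split _ (fun x => 2 * f x) {u, z} ?_ ?_
          · rw [Finset.sum_pair huz, Finset.sum_pair huz]
            norm_num [hu2, hz1, huz]
          · intro x _
            by_cases hxz : x = z
            · simp [hxz, hz1]
            · have := hfle x
              simp only [hxz, if_false]
              split_ifs <;> omega
      · -- impossible
        exfalso
        push_neg at hz
        have hmax := hf.2
        rw [IsDomSet] at hmax
        push_neg at hmax
        obtain ⟨x, hxne, hxd⟩ := hmax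
        simp only [Set.mem_setOf_eq] at hxne hxd
        obtain ⟨y, hxy⟩ := h x
        have hfx : f x = 2 := by
          rcases Nat.lt_or_ge (f x) 2 with hlt | hge
          · exfalso
            have hx1 : f x = 1 := by omega
            have := hz x y hx1 hxy
            exact hxd y (by omega) hxy
          · exact le_antisymm (hfle x) hge
        have hfy : f y ≠ 0 := fun h0 => hxd y h0 hxy
        have hfy1 : f y ≠ 1 := by
          intro h1
          have := hz y x h1 (G.adj_symm hxy)
          omega
        have hfy2 : f y = 2 := by have := hfle y; omega
        exact hc1 ⟨x, y, G.ne_of_adj hxy, hfx, hfy2⟩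
    · -- no vertex with value 2, so f ≡ 1
      have hall1 : ∀ v, f v = 1 := by
        intro v
        have h2 := hfle v
        have : f v ≠ 0 := by
          intro h0
          obtain ⟨w, -, hw2⟩ := hf0 v h0
          exact hc2 ⟨w, hw2⟩
        have : f v ≠ 2 := fun h2' => hc2 ⟨v, h2'⟩
        omega
      have hsf : ∑ v, f v = Fintype.card V := by
        rw [Fintype.card]
        rw [Finset.card_eq_sum_ones]
        exact Finset.sum_congr rfl fun v _ => hall1 v
      by_cases htop : ∃ v c : V, v ≠ c ∧ ¬ G.Adj v c
      · obtain ⟨v, c, hvc, hnadj⟩ := htop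
        obtain ⟨u, hvu⟩ := h v
        have huv : u ≠ v := fun e => G.irrefl (e ▸ hvu)
        have huc : u ≠ c := fun e => hnadj (e ▸ hvu)
        refine ⟨fun x => if x = v then 0 else if x = u then 3 else if x = c then 1 else 2,
          ⟨⟨?_, ?_, ?_⟩, ?_⟩, ?_⟩
        · intro x; dsimp only; split_ifs <;> omega
        · intro x hx
          dsimp only at hx
          have hxv : x = v := by split_ifs at hx <;> first | assumption | omega
          subst hxv
          exact Or.inl ⟨u, hvu, by simp [huv, hvu]⟩
        · intro x hx
          dsimp only at hx
          have hxc : x = c := by split_ifs at hx <;> first | assumption | omega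
          subst hxc
          obtain ⟨w, hcw⟩ := h x
          have hwv : w ≠ v := fun e => hnadj (G.adj_symm (e ▸ hcw))
          have hwx : w ≠ x := fun e => G.irrefl (e ▸ hcw)
          refine ⟨w, hcw, ?_⟩
          by_cases hwu : w = u
          · simp [hwv, hwu, huv]
          · simp [hwv, hwu, hwx]
        · intro hd
          have hset : ∀ x, (if x = v then 0 else if x = u then 3 else if x = c then 1 else 2) = 0 ↔ x = v := by
            intro x; split_ifs <;> simp_all
          obtain ⟨w, hw, hcw⟩ := hd c (by simp only [Set.mem_setOf_eq, hset]; exact hvc.symm)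
          simp only [Set.mem_setOf_eq, hset] at hw
          subst hw
          exact hnadj (G.adj_symm hcw)
        · refine aux_sum_split _ (fun x => 2 * f x) {v, u, c} ?_ ?_
          · have hmem : v ∉ ({u, c} : Finset V) := by simp [huv.symm, hvc]
            have hcv : c ≠ v := hvc.symm
            rw [Finset.sum_insert hmem, Finset.sum_insert hmem,
              Finset.sum_pair huc, Finset.sum_pair huc]
            have hcu : c ≠ u := Ne.symm huc
            norm_num [hall1, huv, hcu, hcv]
          · intro x hxs
            simp only [Finset.mem_insert, Finset.mem_singleton, not_or] at hxs
            obtain ⟨hxv, hxu, hxc⟩ := hxs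
            simp [hxv, hxu, hxc, hall1 x]
      · -- G is complete, card ≠ 2
        push_neg at htop
        have hGtop : G = ⊤ := by
          ext a b
          simp only [SimpleGraph.top_adj]
          exact ⟨fun hab => G.ne_of_adj hab, fun hab => htop a b hab⟩
        obtain ⟨a⟩ := ‹Nonempty V›
        obtain ⟨b, hab⟩ := h a
        have hba : b ≠ a := fun e => G.irrefl (e ▸ hab)
        have hcard2 : 2 ≤ Fintype.card V := by
          have : Nontrivial V := ⟨b, a, hba⟩
          exact Fintype.one_lt_card
        have hcardne : Fintype.card V ≠ 2 := fun e => hK ⟨e, hGtop⟩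
        have hcard3 : 3 ≤ Fintype.card V := by omega
        refine ⟨fun x => if x = a then 2 else 1, ⟨⟨?_, ?_, ?_⟩, ?_⟩, ?_⟩
        · intro x; dsimp only; split_ifs <;> omega
        · intro x hx; dsimp only at hx; exfalso; split_ifs at hx <;> omega
        · intro x hx
          dsimp only at hx
          have hxa : x ≠ a := by intro e; simp [e] at hx
          exact ⟨a, htop x a hxa, by simp⟩
        · intro hd
          obtain ⟨w, hw, -⟩ := hd a (by simp)
          simp only [Set.mem_setOf_eq] at hw
          by_cases hwa : w = a <;> simp [hwa] at hw
        · have hsg : ∑ x, (if x = a then 2 else 1 : ℕ) = Fintype.card V + 1 := by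
            have : ∀ x, (if x = a then 2 else 1 : ℕ) = 1 + (if x = a then 1 else 0) := by
              intro x; split_ifs <;> rfl
            rw [Finset.sum_congr rfl fun x _ => this x, Finset.sum_add_distrib,
              Finset.sum_ite_eq' univ a (fun _ => 1)]
            simp only [Finset.sum_const, smul_eq_mul, mul_one, Finset.mem_univ, if_true,
              Finset.card_univ]
          have h2 : ∑ v, 2 * f v = 2 * Fintype.card V := by
            rw [← Finset.mul_sum, hsf]
          beta_reduce
          rw [hsg, h2]
          omega

lemma k2_case [Nonempty V] (G : SimpleGraph V) (hcard : Fintype.card V = 2) (htop : G = ⊤) :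
    mRomanNum G = 2 ∧ mdrdNum G = 3 := by
  classical
  obtain ⟨a, b, hab, huniv⟩ := Finset.card_eq_two.mp hcard
  have hmem : ∀ x : V, x = a ∨ x = b := by
    intro x
    have : x ∈ ({a, b} : Finset V) := huniv ▸ Finset.mem_univ x
    simpa using this
  have hadj : ∀ x y : V, x ≠ y → G.Adj x y := by
    intro x y hxy; rw [htop]; exact hxy
  have hsum2 : ∀ f : V → ℕ, ∑ v, f v = f a + f b := by
    intro f; rw [show (univ : Finset V) = {a, b} from huniv, Finset.sum_pair hab]
  constructor
  · -- mRomanNum = 2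
    refine le_antisymm ?_ ?_
    · refine Nat.sInf_le ⟨fun _ => 1, aux_mrdf_one G, ?_⟩
      rw [hsum2 (fun _ => 1)]
    · obtain ⟨f, hf, hsum⟩ := Nat.sInf_mem (aux_mroman_nonempty G)
      rw [mRomanNum, ← hsum, hsum2]
      clear hsum
      by_contra hlt
      push_neg at hlt
      have key : ∀ x : V, f x = 0 → False := by
        intro x hx
        obtain ⟨u, hu, hu2⟩ := hf.1.2 x hx
        have : f a + f b ≥ 2 := by
          rcases hmem u with rfl | rfl <;> omega
        omega
      have ha : f a ≠ 0 := key a; have hb : f b ≠ 0 := key b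
      omega
  · -- mdrdNum = 3
    refine le_antisymm ?_ ?_
    · refine Nat.sInf_le ⟨fun x => if x = a then 2 else 1, ⟨⟨?_, ?_, ?_⟩, ?_⟩, ?_⟩
      · intro x; dsimp only; split_ifs <;> omega
      · intro x hx; dsimp only at hx; exfalso; split_ifs at hx <;> omega
      · intro x hx
        dsimp only at hx
        have hxa : x ≠ a := by intro e; simp [e] at hx
        exact ⟨a, hadj x a hxa, by simp⟩
      · intro hd
        obtain ⟨w, hw, -⟩ := hd a (by simp)
        simp only [Set.mem_setOf_eq] at hw
        by_cases hwa : w = a <;> simp [hwa] at hw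
      · rw [hsum2]; simp [hab.symm]
    · have hne : {w | ∃ f, IsMDRDF G f ∧ ∑ v, f v = w}.Nonempty := by
        refine ⟨_, fun x => if x = a then 2 else 1, ⟨⟨?_, ?_, ?_⟩, ?_⟩, rfl⟩
        · intro x; dsimp only; split_ifs <;> omega
        · intro x hx; dsimp only at hx; exfalso; split_ifs at hx <;> omega
        · intro x hx
          dsimp only at hx
          have hxa : x ≠ a := by intro e; simp [e] at hx
          exact ⟨a, hadj x a hxa, by simp⟩
        · intro hd
          obtain ⟨w, hw, -⟩ := hd a (by simp)
          simp only [Set.mem_setOf_eq] at hw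
          by_cases hwa : w = a <;> simp [hwa] at hw
      obtain ⟨f, hf, hsum⟩ := Nat.sInf_mem hne
      rw [mdrdNum, ← hsum, hsum2]
      clear hsum
      have hab' : G.Adj a b := hadj a b hab
      by_contra hlt
      push_neg at hlt
      have key : ∀ x : V, f x = 0 → False := by
        intro x hx
        rcases hf.1.2.1 x hx with ⟨u, hu, hu3⟩ | ⟨u, w, huw, hu, hw, hu2, hw2⟩
        · have : f a + f b ≥ 3 := by rcases hmem u with rfl | rfl <;> omega
          omega
        · have hux : u ≠ x := fun e => G.irrefl (e ▸ hu)
          have hwx : w ≠ x := fun e => G.irrefl (e ▸ hw)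
          rcases hmem x with rfl | rfl
          · rcases hmem u with rfl | rfl
            · exact hux rfl
            · rcases hmem w with rfl | rfl
              · omega
              · exact huw rfl
          · rcases hmem u with rfl | rfl
            · rcases hmem w with rfl | rfl
              · exact huw rfl
              · omega
            · exact hux rfl
      have key1 : ∀ x : V, f x = 1 → False := by
        intro x hx
        obtain ⟨u, hu, hu23⟩ := hf.1.2.2 x hx
        have : f a + f b ≥ 3 := by
          rcases hmem x with rfl | rfl <;> rcases hmem u with rfl | rfl <;>
            first | (exact absurd rfl (G.ne_of_adj hu)) | omega
        omega
      have ha0 : f a ≠ 0 := key a; have ha1 : f a ≠ 1 := key1 a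
      have hb0 : f b ≠ 0 := key b; have hb1 : f b ≠ 1 := key1 b
      omega

end Aux

theorem stmt4 {V : Type*} [Fintype V] [Nonempty V] (G : SimpleGraph V)
    (h : ∀ v, ∃ u, G.Adj v u) :
    mdrdNum G ≤ 2 * mRomanNum G - 1 ∧
    (mdrdNum G = 2 * mRomanNum G - 1 ↔ Fintype.card V = 2 ∧ G = ⊤) := by
  by_cases hK : Fintype.card V = 2 ∧ G = ⊤
  · obtain ⟨hcard, htop⟩ := hK
    obtain ⟨h1, h2⟩ := k2_case G hcard htop
    rw [h1, h2]
    exact ⟨by norm_num, by simp [hcard, htop]⟩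
  · have hm := main_ineq G h hK
    have hw := aux_mroman_pos G
    refine ⟨by omega, ⟨fun he => by exfalso; omega, fun hk => absurd hk hK⟩⟩
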